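/- Let A be an n×n complex matrix (not necessarily Hermitian) with n ≥ 1 and let r ≥ 1 be an integer. Then r·Σ_{i=1}^n χ_r[A_i](x) = (d/dx) χ_r[A](x), as an identity of polynomials in x. -/

import Mathlib

open Polynomial Matrix

/-- The number of cycles of a permutation, counting fixed points as cycles. -/
def cycleCount {ι : Type*} [Fintype ι] [DecidableEq ι] (σ : Equiv.Perm ι) : ℕ :=
  σ.cycleType.card + (Fintype.card ι - σ.support.card)

/-- The `r`-determinant `det_r(M) = Σ_σ sgn(σ) r^{c(σ)} Π_i M_{i σ(i)}`. -/
noncomputable def detr {ι : Type*} [Fintype ι] [DecidableEq ι] {R : Type*} [CommRing R]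
    (r : ℕ) (M : Matrix ι ι R) : R :=
  ∑ σ : Equiv.Perm ι, ((Equiv.Perm.sign σ : ℤ) : R) * (r : R) ^ cycleCount σ * ∏ i, M i (σ i)

/-- The `r`-characteristic polynomial `χ_r[A](x) = det_r(xI - A)`. -/
noncomputable def chir {n : ℕ} (r : ℕ) (A : Matrix (Fin n) (Fin n) ℂ) : Polynomial ℂ :=
  detr r (Matrix.charmatrix A)

-- Finset version of derivative_prod
theorem derivative_finset_prod {ι R : Type*} [DecidableEq ι] [CommSemiring R]
    (s : Finset ι) (f : ι → R[X]) :
    derivative (∏ i ∈ s, f i)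
      = ∑ b ∈ s, (∏ a ∈ s.erase b, f a) * derivative (f b) := by
  classical
  refine Finset.induction_on s (by simp) ?_
  intro x s hx ih
  rw [Finset.prod_insert hx, derivative_mul, ih, Finset.sum_insert hx,
    Finset.erase_insert hx, Finset.mul_sum]
  have h1 : ∀ b ∈ s, (∏ a ∈ (insert x s).erase b, f a) * derivative (f b)
      = f x * ((∏ a ∈ s.erase b, f a) * derivative (f b)) := fun b hb => by
    rw [Finset.erase_insert_of_ne (by rintro rfl; exact hx hb),
      Finset.prod_insert (fun h => hx (Finset.mem_of_mem_erase h)), mul_assoc]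
  rw [Finset.sum_congr rfl h1, mul_comm (derivative (f x)), add_comm]

theorem derivative_charmatrix' {m : ℕ} (A : Matrix (Fin m) (Fin m) ℂ) (i j : Fin m) :
    derivative (charmatrix A i j) = if i = j then 1 else 0 := by
  by_cases h : i = j
  · subst h; simp [charmatrix_apply_eq]
  · simp [charmatrix_apply_ne _ _ _ h, h]

theorem cycleCount_extendDomain {n : ℕ} (j : Fin (n+1)) (τ : Equiv.Perm (Fin n)) :
    cycleCount (τ.extendDomain (finSuccAboveEquiv j)) = cycleCount τ + 1 := by
  unfold cycleCount
  rw [Equiv.Perm.cycleType_extendDomain, Equiv.Perm.card_support_extend_domain]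
  have h := Finset.card_le_univ τ.support
  simp only [Fintype.card_fin] at *
  omega

theorem extendDomain_fixes {n : ℕ} (j : Fin (n+1)) (τ : Equiv.Perm (Fin n)) :
    (τ.extendDomain (finSuccAboveEquiv j)) j = j :=
  Equiv.Perm.extendDomain_apply_not_subtype _ _ (by simp)

theorem extendDomain_succAbove {n : ℕ} (j : Fin (n+1)) (τ : Equiv.Perm (Fin n)) (i : Fin n) :
    (τ.extendDomain (finSuccAboveEquiv j)) (j.succAbove i) = j.succAbove (τ i) := by
  have h := Equiv.Perm.extendDomain_apply_image τ (finSuccAboveEquiv j) i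
  simpa [finSuccAboveEquiv_apply] using h

theorem charmatrix_submatrix' {n : ℕ} (A : Matrix (Fin (n+1)) (Fin (n+1)) ℂ) (j : Fin (n+1))
    (i k : Fin n) :
    charmatrix (A.submatrix j.succAbove j.succAbove) i k
      = charmatrix A (j.succAbove i) (j.succAbove k) := by
  by_cases h : i = k
  · subst h; rw [charmatrix_apply_eq, charmatrix_apply_eq]; simp
  · rw [charmatrix_apply_ne _ _ _ h, charmatrix_apply_ne]
    · simp
    · exact fun he => h (Fin.succAbove_right_injective he)

theorem prod_erase_extend {n : ℕ} (A : Matrix (Fin (n+1)) (Fin (n+1)) ℂ) (j : Fin (n+1))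
    (τ : Equiv.Perm (Fin n)) :
    (∏ i ∈ Finset.univ.erase j, charmatrix A i ((τ.extendDomain (finSuccAboveEquiv j)) i))
      = ∏ i : Fin n, charmatrix (A.submatrix j.succAbove j.succAbove) i (τ i) := by
  refine (Finset.prod_bij (fun (i : Fin n) _ => j.succAbove i) ?_ ?_ ?_ ?_).symm
  · intro i _; simp [Finset.mem_erase, Fin.succAbove_ne]
  · intro a _ b _ h; exact Fin.succAbove_right_injective h
  · intro k hk
    rcases Fin.exists_succAbove_eq (Finset.mem_erase.mp hk).1 with ⟨i, hi⟩
    exact ⟨i, Finset.mem_univ i, hi⟩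
  · intro i _
    rw [charmatrix_submatrix', extendDomain_succAbove]

theorem sum_fixed {n : ℕ} (j : Fin (n+1)) (g : Equiv.Perm (Fin (n+1)) → Polynomial ℂ) :
    (∑ σ ∈ Finset.univ.filter (fun σ : Equiv.Perm (Fin (n+1)) => σ j = j), g σ)
      = ∑ τ : Equiv.Perm (Fin n), g (τ.extendDomain (finSuccAboveEquiv j)) := by
  refine (Finset.sum_bij (fun (τ : Equiv.Perm (Fin n)) _ =>
      τ.extendDomain (finSuccAboveEquiv j)) ?_ ?_ ?_ ?_).symm
  · intro τ _; simp [Finset.mem_filter, extendDomain_fixes]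
  · intro a _ b _ h
    exact Equiv.Perm.extendDomainHom_injective (finSuccAboveEquiv j) h
  · intro σ hσ
    have hj : σ j = j := (Finset.mem_filter.mp hσ).2
    have hp : ∀ x : Fin (n+1), x ≠ j ↔ σ x ≠ j := by
      intro x
      constructor
      · intro hx he; exact hx (σ.injective (he.trans hj.symm))
      · intro hx he; exact hx (he ▸ hj)
    refine ⟨(finSuccAboveEquiv j).permCongr.symm (σ.subtypePerm (fun x => (hp x).symm)), Finset.mem_univ _, ?_⟩
    ext x
    by_cases hx : x = j
    · subst hx; rw [extendDomain_fixes, hj]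
    · rw [Equiv.Perm.extendDomain_apply_subtype ((finSuccAboveEquiv j).permCongr.symm (σ.subtypePerm (fun x => (hp x).symm))) (finSuccAboveEquiv j) hx]
      simp [Equiv.permCongr_apply, Equiv.Perm.subtypePerm_apply]
  · intros; rfl

/-- Thompson-type formula for the `r`-characteristic polynomial: for an `(n+1)×(n+1)`
complex matrix `A` (not necessarily Hermitian), `r Σ_i χ_r[A_i] = (χ_r[A])'`, where `A_i`
deletes the `i`-th row and column. -/
theorem chir_thompson_formula {n : ℕ} (r : ℕ) (hr : 1 ≤ r)
    (A : Matrix (Fin (n+1)) (Fin (n+1)) ℂ) :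
    (r : ℂ) • ∑ i : Fin (n+1), chir r (A.submatrix i.succAbove i.succAbove)
      = Polynomial.derivative (chir r A) := by
  classical
  have hterm : ∀ σ : Equiv.Perm (Fin (n+1)),
      derivative (((Equiv.Perm.sign σ : ℤ) : Polynomial ℂ) * (r : Polynomial ℂ) ^ cycleCount σ
          * ∏ i, charmatrix A i (σ i))
      = ∑ j : Fin (n+1), if σ j = j then
          ((Equiv.Perm.sign σ : ℤ) : Polynomial ℂ) * (r : Polynomial ℂ) ^ cycleCount σ *
            ∏ i ∈ Finset.univ.erase j, charmatrix A i (σ i) else 0 := by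
    intro σ
    have h1 : derivative (((Equiv.Perm.sign σ : ℤ) : Polynomial ℂ)
        * (r : Polynomial ℂ) ^ cycleCount σ) = 0 := by
      simp [derivative_mul, Polynomial.derivative_pow]
    rw [derivative_mul, h1, zero_mul, zero_add, derivative_finset_prod, Finset.mul_sum]
    refine Finset.sum_congr rfl fun j _ => ?_
    rw [derivative_charmatrix']
    by_cases h : σ j = j
    · rw [if_pos h, if_pos h.symm, mul_one, mul_assoc]
    · rw [if_neg h, if_neg (fun he => h he.symm), mul_zero, mul_zero]
  rw [chir, detr, Polynomial.derivative_sum, Finset.sum_congr rfl (fun σ _ => hterm σ),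
    Finset.sum_comm, Finset.smul_sum]
  refine Finset.sum_congr rfl fun j _ => ?_
  rw [← Finset.sum_filter, sum_fixed j, chir, detr, Finset.smul_sum]
  refine Finset.sum_congr rfl fun τ _ => ?_
  rw [prod_erase_extend, cycleCount_extendDomain, Equiv.Perm.sign_extendDomain,
    Polynomial.smul_eq_C_mul, pow_succ, map_natCast]
  ring
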